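/- Let R = F2[x1^{±1},...,xd^{±1}] with adjoint †. Let S be a 2K×N matrix over R, P = (I_{K×K}; I_{K×K}) a 2K×K matrix, and σ_F = (S P). Suppose T is an N×N matrix over R with T + T† = S†S. Define X̃ = (T; I_{N×N}) (a 2N×N matrix), Z̃ = (S†P; 0_{N×K}) (a 2N×K matrix), and σ̃ = (X̃ Z̃). Then σ̃†λ_N σ̃ = σ_F†σ_F, where λ_N = (0 I_N; I_N 0). -/

import Mathlib

/-- The Laurent polynomial ring `F₂[x₁^{±1},…,x_d^{±1}]`, realized as the group algebra
of `ℤ^d` over `F₂`. -/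
abbrev R (d : ℕ) : Type := AddMonoidAlgebra (ZMod 2) (Fin d → ℤ)

/-- The involution (antipode) `f ↦ f̄` induced by `xᵢ ↦ xᵢ⁻¹`, i.e. negation of exponents. -/
noncomputable def bar (d : ℕ) : R d ≃ₐ[ZMod 2] R d :=
  AddMonoidAlgebra.domCongr (ZMod 2) (ZMod 2) (AddEquiv.neg (Fin d → ℤ))

/-- The matrix adjoint `A†`: transpose with the involution applied entrywise. -/
noncomputable def adj {d : ℕ} {m n : Type*} (A : Matrix m n (R d)) : Matrix n m (R d) :=
  (A.map (bar d)).transpose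

/-- The standard symplectic form `λ_M = (0 I; I 0)` with `M × M` blocks. -/
noncomputable def lam (d M : ℕ) : Matrix (Fin M ⊕ Fin M) (Fin M ⊕ Fin M) (R d) :=
  Matrix.fromBlocks 0 1 1 0


lemma bar_bar {d : ℕ} (a : R d) : bar d (bar d a) = a := by
  ext h; simp [bar]

lemma adj_adj {d : ℕ} {m n : Type*} (A : Matrix m n (R d)) : adj (adj A) = A := by
  ext i j
  simp [adj, Matrix.map, bar_bar]

lemma adj_mul {d : ℕ} {m n p : Type*} [Fintype n] (A : Matrix m n (R d)) (B : Matrix n p (R d)) :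
    adj (A * B) = adj B * adj A := by
  unfold adj
  rw [show (A * B).map (bar d) = A.map (bar d) * B.map (bar d) from
    Matrix.map_mul (f := ((bar d : R d ≃ₐ[ZMod 2] R d) : R d →+* R d)), Matrix.transpose_mul]

lemma adj_one {d : ℕ} {n : Type*} [DecidableEq n] : adj (1 : Matrix n n (R d)) = 1 := by
  unfold adj
  rw [show (1 : Matrix n n (R d)).map (bar d) = 1 from
    Matrix.map_one _ (map_zero _) (map_one _), Matrix.transpose_one]

lemma adj_zero {d : ℕ} {m n : Type*} : adj (0 : Matrix m n (R d)) = 0 := by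
  ext i j; simp [adj, Matrix.map]

lemma adj_fromBlocks {d : ℕ} {m₁ m₂ n₁ n₂ : Type*}
    (A : Matrix m₁ n₁ (R d)) (B : Matrix m₁ n₂ (R d)) (C : Matrix m₂ n₁ (R d))
    (D : Matrix m₂ n₂ (R d)) :
    adj (Matrix.fromBlocks A B C D) = Matrix.fromBlocks (adj A) (adj C) (adj B) (adj D) := by
  unfold adj
  rw [Matrix.fromBlocks_map, Matrix.fromBlocks_transpose]

lemma add_self_R {d : ℕ} (a : R d) : a + a = 0 := by
  have h2 : (2 : ZMod 2) = 0 := rfl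
  have : (2 : ZMod 2) • a = 0 := by rw [h2, zero_smul]
  rwa [two_smul] at this

lemma fromRows_map {d : ℕ} {m₁ m₂ n : Type*} (A : Matrix m₁ n (R d)) (B : Matrix m₂ n (R d))
    (f : R d → R d) :
    (Matrix.fromRows A B).map f = Matrix.fromRows (A.map f) (B.map f) := by
  ext (i | i) j <;> rfl

lemma fromColumns_map {d : ℕ} {m n₁ n₂ : Type*} (A : Matrix m n₁ (R d)) (B : Matrix m n₂ (R d))
    (f : R d → R d) :
    (Matrix.fromCols A B).map f = Matrix.fromCols (A.map f) (B.map f) := by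
  ext i (j | j) <;> rfl

lemma mat_add_self {d : ℕ} {m n : Type*} (A : Matrix m n (R d)) : A + A = 0 := by
  exact Matrix.ext fun i j => add_self_R _

/-- The Jordan-Wigner dual generating map preserves all (anti)commutation relations:
with `σ_F = (S P)`, `P = (I; I)`, `T + T† = S†S`, `X̃ = (T; I)`, `Z̃ = (S†P; 0)`,
and `σ̃ = (X̃ Z̃)`, one has `σ̃†λ_N σ̃ = σ_F† σ_F`. -/
theorem stmt_7 (d K N : ℕ) (S : Matrix (Fin K ⊕ Fin K) (Fin N) (R d))
    (P : Matrix (Fin K ⊕ Fin K) (Fin K) (R d))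
    (hP : P = Matrix.fromRows 1 1)
    (σF : Matrix (Fin K ⊕ Fin K) (Fin N ⊕ Fin K) (R d))
    (hσF : σF = Matrix.fromCols S P)
    (T : Matrix (Fin N) (Fin N) (R d))
    (hT : T + adj T = adj S * S)
    (Xt : Matrix (Fin N ⊕ Fin N) (Fin N) (R d))
    (hXt : Xt = Matrix.fromRows T 1)
    (Zt : Matrix (Fin N ⊕ Fin N) (Fin K) (R d))
    (hZt : Zt = Matrix.fromRows (adj S * P) 0)
    (σt : Matrix (Fin N ⊕ Fin N) (Fin N ⊕ Fin K) (R d))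
    (hσt : σt = Matrix.fromCols Xt Zt) :
    adj σt * lam d N * σt = adj σF * σF := by
  have hPP : adj P * P = 0 := by
    rw [hP]
    unfold adj
    rw [fromRows_map, Matrix.map_one _ (map_zero _) (map_one _), Matrix.transpose_fromRows,
      Matrix.transpose_one, Matrix.fromCols_mul_fromRows, one_mul]
    exact mat_add_self _
  have hσtB : σt = Matrix.fromBlocks T (adj S * P) 1 0 := by
    rw [hσt, hXt, hZt, Matrix.fromCols_fromRows_eq_fromBlocks]
  have hadjσt : adj σt = Matrix.fromBlocks (adj T) 1 (adj P * S) 0 := by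
    rw [hσtB, adj_fromBlocks, adj_one, adj_zero, adj_mul, adj_adj]
  rw [hadjσt, hσtB, hσF]
  unfold lam
  rw [Matrix.fromBlocks_multiply, Matrix.fromBlocks_multiply]
  have hadjσF : adj (Matrix.fromCols S P) = Matrix.fromRows (adj S) (adj P) := by
    unfold adj
    rw [fromColumns_map, Matrix.transpose_fromCols]
  rw [hadjσF, Matrix.fromRows_mul_fromCols, hPP]
  simp only [Matrix.mul_zero, Matrix.zero_mul, Matrix.mul_one, Matrix.one_mul,
    add_zero, zero_add, hT]
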